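/- Let m ≥ 1, h > 0, τ > 0, b̄ > 0 and let b_n : ℝ → ℝ be a continuously differentiable function with b_n'(v) ≥ b̄ for all v ∈ ℝ. Then for any data Φ ∈ ℝ^{m+1}, (f_{ik})_{i=0,…,m−1, k=1,…,n} ⊂ ℝ, (p_k)_{k=1,…,n} ⊂ ℝ and (g_k)_{k=1,…,n} ⊂ ℝ, there exists a unique discrete state vector [v]_n = (v(0),…,v(n)) with v(k) ∈ ℝ^{m+1}; that is, a unique family satisfying v_i(0) = Φ_i for i = 0,…,m and, for every k = 1,…,n and every η = (η_0,…,η_m) ∈ ℝ^{m+1}, the identity Σ_{i=0}^{m−1} h[ ((b_n(v_i(k)) − b_n(v_i(k−1)))/τ)·η_i + ((v_{i+1}(k) − v_i(k))/h)·((η_{i+1} − η_i)/h) − f_{ik} η_i ] − p_k η_m + g_k η_0 = 0. -/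

import Mathlib

open Filter Finset

theorem st_mono' (bbar : ℝ) (bn : ℝ → ℝ) (hbn : ContDiff ℝ 1 bn)
    (hbn' : ∀ s : ℝ, bbar ≤ deriv bn s) (a b : ℝ) :
    bbar * (a - b)^2 ≤ (bn a - bn b) * (a - b) := by
  have hd : Differentiable ℝ bn := hbn.differentiable one_ne_zero
  have hmono : Monotone (fun s => bn s - bbar * s) := by
    apply monotone_of_deriv_nonneg
    · exact hd.sub (differentiable_id.const_mul bbar)
    · intro x
      have h1 : HasDerivAt (fun s => bn s - bbar * s) (deriv bn x - bbar * 1) x :=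
        (hd x).hasDerivAt.sub ((hasDerivAt_id x).const_mul bbar)
      rw [h1.deriv]
      nlinarith [hbn' x]
  rcases le_total b a with hba | hab
  · have h2 := hmono hba
    simp only at h2
    nlinarith
  · have h2 := hmono hab
    simp only at h2
    nlinarith

noncomputable def stChainAux (b0 : ℝ → ℝ) (F : ℕ → ℝ → ℝ) (t : ℝ) : ℕ → ℝ × ℝ
  | 0 => (t, b0 t)
  | (j+1) => ((stChainAux b0 F t j).2,
      2 * (stChainAux b0 F t j).2 - (stChainAux b0 F t j).1
        + F (j+1) ((stChainAux b0 F t j).2))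

noncomputable def stChain (b0 : ℝ → ℝ) (F : ℕ → ℝ → ℝ) (t : ℝ) (j : ℕ) : ℝ :=
  (stChainAux b0 F t j).1

theorem st_layer (m : ℕ) (hm : 1 ≤ m) (h τ bbar : ℝ) (hh : 0 < h) (hτ : 0 < τ)
    (hbbar : 0 < bbar) (bn : ℝ → ℝ) (hbn : ContDiff ℝ 1 bn)
    (hbn' : ∀ s : ℝ, bbar ≤ deriv bn s) (u f : ℕ → ℝ) (p g : ℝ) :
    ∃ x : ℕ → ℝ, ∀ η : ℕ → ℝ,
      (∑ i ∈ Finset.range m,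
        h * ((bn (x i) - bn (u i)) / τ * η i
          + (x (i + 1) - x i) / h * ((η (i + 1) - η i) / h)
          - f i * η i)) - p * η m + g * η 0 = 0 := by
  have hd : Differentiable ℝ bn := hbn.differentiable one_ne_zero
  set b0 : ℝ → ℝ := fun t => t + h^2 * ((bn t - bn (u 0)) / τ - f 0) + h * g with hb0
  set F : ℕ → ℝ → ℝ := fun j s => h^2 * ((bn s - bn (u j)) / τ - f j) with hF
  set X : ℝ → ℕ → ℝ := fun t j => stChain b0 F t j with hX
  have hX0 : ∀ t, X t 0 = t := fun t => rfl
  have hX1 : ∀ t, X t 1 = b0 t := fun t => rfl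
  have hX2 : ∀ t j, X t (j+2) = 2 * X t (j+1) - X t j + F (j+1) (X t (j+1)) := fun t j => rfl
  set c : ℝ := h^2 * bbar / τ with hc
  have hcpos : 0 < c := by positivity
  -- derivative lemma
  have dlem : ∀ j : ℕ, ∀ t : ℝ, ∃ a b : ℝ,
      HasDerivAt (fun s => X s j) a t ∧ HasDerivAt (fun s => X s (j+1)) b t ∧
      1 ≤ a ∧ a + c ≤ b := by
    intro j
    induction j with
    | zero =>
      intro t
      refine ⟨1, 1 + h^2 * (deriv bn t) / τ, hasDerivAt_id t, ?_, le_refl 1, ?_⟩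
      · have hb : HasDerivAt bn (deriv bn t) t := (hd t).hasDerivAt
        have h1 : HasDerivAt (fun s => s + h^2 * ((bn s - bn (u 0)) / τ - f 0) + h * g)
            (1 + h^2 * ((deriv bn t) / τ)) t := by
          have := ((hasDerivAt_id t).add
            ((((hb.sub_const (bn (u 0))).div_const τ).sub_const (f 0)).const_mul (h^2))).add_const (h * g)
          exact this
        have h2 : (fun s => X s 1) = fun s => s + h^2 * ((bn s - bn (u 0)) / τ - f 0) + h * g := rfl
        rw [h2]
        convert h1 using 1
        ring
      · have hb := hbn' t
        have h3 : h^2 * bbar / τ ≤ h^2 * (deriv bn t) / τ := by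
          gcongr
        linarith
    | succ j ih =>
      intro t
      obtain ⟨a, b, ha, hb, h1a, hab⟩ := ih t
      refine ⟨b, 2*b - a + h^2 * (deriv bn (X t (j+1))) * b / τ, hb, ?_, by linarith, ?_⟩
      · have hfun : (fun s => X s (j+2))
            = fun s => 2 * X s (j+1) - X s j + h^2 * ((bn (X s (j+1)) - bn (u (j+1))) / τ - f (j+1)) := rfl
        rw [hfun]
        have hbc : HasDerivAt (fun s => bn (X s (j+1))) ((deriv bn (X t (j+1))) * b) t :=
          (hd (X t (j+1))).hasDerivAt.comp t hb
        have := ((hb.const_mul 2).sub ha).add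
          ((((hbc.sub_const (bn (u (j+1)))).div_const τ).sub_const (f (j+1))).const_mul (h^2))
        exact this.congr_deriv (by ring)
      · have hbnpos := hbn' (X t (j+1))
        have hb1 : 1 ≤ b := by linarith
        have h3 : c ≤ h^2 * (deriv bn (X t (j+1))) * b / τ := by
          rw [hc, div_le_div_iff₀ hτ hτ]
          nlinarith [mul_nonneg (mul_nonneg (sq_nonneg h) hτ.le)
              (mul_nonneg (sub_nonneg.2 hbnpos) (by linarith : (0:ℝ) ≤ b)),
            mul_nonneg (mul_nonneg (sq_nonneg h) hτ.le)
              (mul_nonneg hbbar.le (by linarith : (0:ℝ) ≤ b - 1))]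
        linarith
  obtain ⟨m', rfl⟩ : ∃ m', m = m' + 1 := ⟨m - 1, (Nat.succ_pred_eq_of_pos hm).symm⟩
  set ψ : ℝ → ℝ := fun t => X t (m'+1) - X t m' with hψ
  have hψd : ∀ t, ∃ d, HasDerivAt ψ d t ∧ c ≤ d := by
    intro t
    obtain ⟨a, b, ha, hb, h1a, hab⟩ := dlem m' t
    exact ⟨b - a, hb.sub ha, by linarith⟩
  have hψdiff : Differentiable ℝ ψ := fun t => ((hψd t).choose_spec.1).differentiableAt
  have hψge : ∀ t, c ≤ deriv ψ t := by
    intro t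
    obtain ⟨d, hdd, hcd⟩ := hψd t
    rw [hdd.deriv]; exact hcd
  have hmono : Monotone (fun t => ψ t - c * t) := by
    apply monotone_of_deriv_nonneg
    · exact hψdiff.sub (differentiable_id.const_mul c)
    · intro t
      have h1 : HasDerivAt (fun t => ψ t - c * t) (deriv ψ t - c * 1) t :=
        (hψdiff t).hasDerivAt.sub ((hasDerivAt_id t).const_mul c)
      rw [h1.deriv]
      have := hψge t
      linarith
  have hsurj : Function.Surjective ψ := by
    apply Continuous.surjective hψdiff.continuous
    · apply tendsto_atTop_mono' atTop (f₁ := fun t => (ψ 0 - c * 0) + c * t)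
      · filter_upwards [eventually_ge_atTop (0:ℝ)] with t ht
        have := hmono ht
        simp only at this
        linarith
      · exact tendsto_atTop_add_const_left _ _ (tendsto_id.const_mul_atTop hcpos)
    · apply tendsto_atBot_mono' atBot (f₁ := fun t => (ψ 0 - c * 0) + c * t)
      · filter_upwards [eventually_le_atBot (0:ℝ)] with t ht
        have := hmono ht
        simp only at this
        linarith
      · exact tendsto_atBot_add_const_left _ _ (tendsto_id.const_mul_atBot hcpos)
  obtain ⟨t₀, ht₀⟩ := hsurj (h * p)
  refine ⟨fun j => X t₀ j, ?_⟩
  intro η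
  have tel : ∀ k : ℕ,
      (∑ i ∈ Finset.range (k+1),
        h * ((bn (X t₀ i) - bn (u i)) / τ * η i
          + (X t₀ (i + 1) - X t₀ i) / h * ((η (i + 1) - η i) / h)
          - f i * η i)) = (X t₀ (k+1) - X t₀ k) * η (k+1) / h - g * η 0 := by
    intro k
    induction k with
    | zero =>
      rw [Finset.sum_range_one]
      have h1 : X t₀ 1 = X t₀ 0 + h^2 * ((bn (X t₀ 0) - bn (u 0)) / τ - f 0) + h * g := rfl
      rw [h1]
      field_simp
      ring
    | succ k ih =>
      rw [Finset.sum_range_succ, ih]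
      have h2 : X t₀ (k+2) = 2 * X t₀ (k+1) - X t₀ k
          + h^2 * ((bn (X t₀ (k+1)) - bn (u (k+1))) / τ - f (k+1)) := rfl
      rw [h2]
      field_simp
      ring
  rw [tel m']
  have hψval : X t₀ (m'+1) - X t₀ m' = h * p := ht₀
  rw [hψval]
  field_simp
  ring

/-- The discrete state vector property for the finite-difference discretization of the
multiphase Stefan problem: `v k i` is the value `v_i(k)`; `Φd` is the initial data,
`fd i k` the sources, `pd k` and `gd k` the boundary flux data. -/
def IsDiscreteStateVector (bn : ℝ → ℝ) (τ h : ℝ) (n m : ℕ)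
    (Φd : ℕ → ℝ) (fd : ℕ → ℕ → ℝ) (pd gd : ℕ → ℝ) (v : ℕ → ℕ → ℝ) : Prop :=
  (∀ i ≤ m, v 0 i = Φd i) ∧
  ∀ k, 1 ≤ k → k ≤ n → ∀ η : ℕ → ℝ,
    (∑ i ∈ Finset.range m,
      h * ((bn (v k i) - bn (v (k - 1) i)) / τ * η i
        + (v k (i + 1) - v k i) / h * ((η (i + 1) - η i) / h)
        - fd i k * η i))
      - pd k * η m + gd k * η 0 = 0

set_option maxHeartbeats 1600000 in
/-- Existence and uniqueness of the discrete state vector. -/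
theorem exists_unique_discrete_state_vector
    (m n : ℕ) (hm : 1 ≤ m) (h τ bbar : ℝ) (hh : 0 < h) (hτ : 0 < τ) (hbbar : 0 < bbar)
    (bn : ℝ → ℝ) (hbn : ContDiff ℝ 1 bn) (hbn' : ∀ s : ℝ, bbar ≤ deriv bn s)
    (Φd : ℕ → ℝ) (fd : ℕ → ℕ → ℝ) (pd gd : ℕ → ℝ) :
    ∃ v : ℕ → ℕ → ℝ, IsDiscreteStateVector bn τ h n m Φd fd pd gd v ∧
      ∀ w : ℕ → ℕ → ℝ, IsDiscreteStateVector bn τ h n m Φd fd pd gd w →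
        ∀ k ≤ n, ∀ i ≤ m, w k i = v k i := by
  have layerEx : ∀ (u : ℕ → ℝ) (k : ℕ), ∃ x : ℕ → ℝ, ∀ η : ℕ → ℝ,
      (∑ i ∈ Finset.range m,
        h * ((bn (x i) - bn (u i)) / τ * η i
          + (x (i + 1) - x i) / h * ((η (i + 1) - η i) / h)
          - fd i k * η i)) - pd k * η m + gd k * η 0 = 0 :=
    fun u k => st_layer m hm h τ bbar hh hτ hbbar bn hbn hbn' u (fun i => fd i k) (pd k) (gd k)
  obtain ⟨v, hv0, hvspec⟩ : ∃ v : ℕ → ℕ → ℝ, (∀ i, v 0 i = Φd i) ∧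
      ∀ k : ℕ, ∀ η : ℕ → ℝ,
      (∑ i ∈ Finset.range m,
        h * ((bn (v (k+1) i) - bn (v k i)) / τ * η i
          + (v (k+1) (i + 1) - v (k+1) i) / h * ((η (i + 1) - η i) / h)
          - fd i (k+1) * η i)) - pd (k+1) * η m + gd (k+1) * η 0 = 0 := by
    refine ⟨fun k => Nat.rec Φd (fun k' vk => Classical.choose (layerEx vk (k'+1))) k,
      fun i => rfl, ?_⟩
    intro k
    exact Classical.choose_spec
      (layerEx (Nat.rec Φd (fun k' vk => Classical.choose (layerEx vk (k'+1))) k) (k+1))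
  have hDSV : IsDiscreteStateVector bn τ h n m Φd fd pd gd v := by
    constructor
    · intro i _; exact hv0 i
    · intro k hk1 hkn η
      obtain ⟨k', rfl⟩ : ∃ k', k = k'+1 := ⟨k-1, (Nat.succ_pred_eq_of_pos hk1).symm⟩
      simpa using hvspec k' η
  refine ⟨v, hDSV, ?_⟩
  intro w hw k
  induction k with
  | zero =>
    intro _ i hi
    rw [hw.1 i hi]
    exact (hDSV.1 i hi).symm
  | succ k ih =>
    intro hkn
    have prev : ∀ i ≤ m, w k i = v k i := ih (by omega)
    set η : ℕ → ℝ := fun j => w (k+1) j - v (k+1) j with hη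
    clear_value η
    have h1 := hw.2 (k+1) (by omega) hkn η
    have h2 := hDSV.2 (k+1) (by omega) hkn η
    simp only [Nat.add_sub_cancel] at h1 h2
    have hsum : ∑ i ∈ Finset.range m,
        (h/τ * ((bn (w (k+1) i) - bn (v (k+1) i)) * (w (k+1) i - v (k+1) i))
          + h * ((η (i+1) - η i)/h)^2) = 0 := by
      have h4 : ∑ i ∈ Finset.range m,
          ((h * ((bn (w (k+1) i) - bn (w k i)) / τ * η i
            + (w (k+1) (i + 1) - w (k+1) i) / h * ((η (i + 1) - η i) / h)
            - fd i (k+1) * η i))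
          - (h * ((bn (v (k+1) i) - bn (v k i)) / τ * η i
            + (v (k+1) (i + 1) - v (k+1) i) / h * ((η (i + 1) - η i) / h)
            - fd i (k+1) * η i))) = 0 := by
        rw [Finset.sum_sub_distrib]
        linarith
      rw [← h4]
      apply Finset.sum_congr rfl
      intro i hi'
      have hiw : w k i = v k i := prev i (le_of_lt (Finset.mem_range.1 hi'))
      rw [hiw]
      simp only [hη]
      field_simp
      ring
    have hnn : ∀ i ∈ Finset.range m,
        0 ≤ h/τ * ((bn (w (k+1) i) - bn (v (k+1) i)) * (w (k+1) i - v (k+1) i))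
          + h * ((η (i+1) - η i)/h)^2 := by
      intro i _
      have hmn := st_mono' bbar bn hbn hbn' (w (k+1) i) (v (k+1) i)
      have h5 : 0 ≤ (bn (w (k+1) i) - bn (v (k+1) i)) * (w (k+1) i - v (k+1) i) := by
        nlinarith [sq_nonneg (w (k+1) i - v (k+1) i)]
      have h6 : 0 ≤ h/τ := by positivity
      have h7 : 0 ≤ h * ((η (i+1) - η i)/h)^2 := by positivity
      nlinarith
    have hzero := (Finset.sum_eq_zero_iff_of_nonneg hnn).1 hsum
    have hzi : ∀ i < m, w (k+1) i = v (k+1) i ∧ η (i+1) = η i := by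
      intro i him
      have hz := hzero i (Finset.mem_range.2 him)
      have hmn := st_mono' bbar bn hbn hbn' (w (k+1) i) (v (k+1) i)
      have h5 : 0 ≤ (bn (w (k+1) i) - bn (v (k+1) i)) * (w (k+1) i - v (k+1) i) := by
        nlinarith [sq_nonneg (w (k+1) i - v (k+1) i)]
      have h6 : 0 < h/τ := by positivity
      have h7 : 0 ≤ h * ((η (i+1) - η i)/h)^2 := by positivity
      have ha0 : (bn (w (k+1) i) - bn (v (k+1) i)) * (w (k+1) i - v (k+1) i) = 0 := by
        nlinarith
      have hb0 : ((η (i+1) - η i)/h)^2 = 0 := by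
        nlinarith
      constructor
      · have hd2 : (w (k+1) i - v (k+1) i)^2 ≤ 0 := by nlinarith
        have hd3 : (w (k+1) i - v (k+1) i)^2 = 0 :=
          le_antisymm hd2 (sq_nonneg _)
        have hd4 : w (k+1) i - v (k+1) i = 0 := sq_eq_zero_iff.1 hd3
        linarith
      · have hq := sq_eq_zero_iff.1 hb0
        rcases div_eq_zero_iff.1 hq with h8 | h8
        · linarith
        · exact absurd h8 (ne_of_gt hh)
    intro i hi
    rcases lt_or_eq_of_le hi with him | heq
    · exact (hzi i him).1
    · rw [heq]
      have h5 : m - 1 < m := by omega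
      have h6 := (hzi (m-1) h5).2
      have h7 := (hzi (m-1) h5).1
      have h8 : m - 1 + 1 = m := by omega
      rw [h8] at h6
      have h9 : η (m-1) = 0 := by
        simp only [hη]
        rw [h7]
        ring
      have h10 : η m = 0 := h6.trans h9
      simp only [hη] at h10
      linarith
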